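/- Any two admissible colorings of the same locally transitive tournament are related by weaving: if c and c′ are admissible colorings of a locally transitive tournament on a finite set V, then there exists f : V → ℤ/2ℤ such that c′{u,w} = c{u,w} + f(u) + f(w) for all distinct u, w ∈ V. -/
import Mathlib
set_option maxHeartbeats 1000000


/-- `r` is a tournament on `V`: an irreflexive relation such that for all distinct
`u, w` exactly one of `r u w` and `r w u` holds. -/
def IsTournament {V : Type*} (r : V → V → Prop) : Prop :=
  (∀ v, ¬ r v v) ∧ ∀ u w, u ≠ w → (r u w ↔ ¬ r w u)

/-- A tournament is locally transitive if for every vertex `v` the restriction of `r`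
to the in-neighborhood and to the out-neighborhood are both transitive. -/
def IsLocallyTransitive {V : Type*} (r : V → V → Prop) : Prop :=
  ∀ v, (∀ a b c, r a v → r b v → r c v → r a b → r b c → r a c) ∧
       (∀ a b c, r v a → r v b → r v c → r a b → r b c → r a c)

/-- The restriction of `r` to `{i, j, k}` is a directed 3-cycle. -/
def IsCycle3 {V : Type*} (r : V → V → Prop) (i j k : V) : Prop :=
  (r i j ∧ r j k ∧ r k i) ∨ (r i k ∧ r k j ∧ r j i)

/-- The restriction of `r` to `{i, j, k}` is transitive, i.e. has a source and a
sink. -/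
def IsTrans3 {V : Type*} (r : V → V → Prop) (i j k : V) : Prop :=
  (r i j ∧ r j k ∧ r i k) ∨ (r i k ∧ r k j ∧ r i j) ∨ (r j i ∧ r i k ∧ r j k) ∨
  (r j k ∧ r k i ∧ r j i) ∨ (r k i ∧ r i j ∧ r k j) ∨ (r k j ∧ r j i ∧ r k i)

/-- A (symmetric) `ℤ/2ℤ`-coloring of the pairs of distinct vertices is admissible if
on every directed 3-cycle the colors sum to `0` and on every transitive triple they
sum to `1`. -/
def IsAdmissibleColoring {V : Type*} (r : V → V → Prop) (c : V → V → ZMod 2) : Prop :=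
  ∀ i j k : V, i ≠ j → j ≠ k → i ≠ k →
    (IsCycle3 r i j k → c i j + c j k + c i k = 0) ∧
    (IsTrans3 r i j k → c i j + c j k + c i k = 1)

/-- Any two admissible colorings of the same locally transitive tournament are
related by weaving: there is `f : V → ℤ/2ℤ` with
`c′{u,w} = c{u,w} + f(u) + f(w)` for all distinct `u, w`. -/
theorem admissible_colorings_weaving_related {V : Type*} [Fintype V]
    (r : V → V → Prop) (htour : IsTournament r) (hloc : IsLocallyTransitive r)
    (c c' : V → V → ZMod 2)
    (hsym : ∀ u w, c u w = c w u) (hsym' : ∀ u w, c' u w = c' w u)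
    (hadm : IsAdmissibleColoring r c) (hadm' : IsAdmissibleColoring r c') :
    ∃ f : V → ZMod 2, ∀ u w : V, u ≠ w → c' u w = c u w + f u + f w := by
  classical
  rcases isEmpty_or_nonempty V with h | h
  · exact ⟨fun _ => 0, fun u _ _ => (h.elim u)⟩
  obtain ⟨v0⟩ := h
  have hx : ∀ x : ZMod 2, x + x = 0 := by decide
  have tot : ∀ i j : V, i ≠ j → r i j ∨ r j i := by
    intro i j hij
    by_cases h : r i j
    · exact Or.inl h
    · exact Or.inr ((htour.2 j i hij.symm).mpr h)
  have tri : ∀ i j k : V, i ≠ j → j ≠ k → i ≠ k →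
      IsCycle3 r i j k ∨ IsTrans3 r i j k := by
    intro i j k hij hjk hik
    rcases tot i j hij with h1 | h1 <;> rcases tot j k hjk with h2 | h2 <;>
      rcases tot i k hik with h3 | h3 <;> unfold IsCycle3 IsTrans3 <;> tauto
  have key : ∀ i j k : V, i ≠ j → j ≠ k → i ≠ k →
      (c' i j + c i j) + (c' j k + c j k) + (c' i k + c i k) = 0 := by
    intro i j k hij hjk hik
    rcases tri i j k hij hjk hik with h | h
    · have h1 := (hadm i j k hij hjk hik).1 h
      have h2 := (hadm' i j k hij hjk hik).1 h
      linear_combination h1 + h2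
    · have h1 := (hadm i j k hij hjk hik).2 h
      have h2 := (hadm' i j k hij hjk hik).2 h
      have h3 : (1 : ZMod 2) + 1 = 0 := by decide
      linear_combination h1 + h2 + h3
  refine ⟨fun u => if u = v0 then 0 else c' u v0 + c u v0, ?_⟩
  intro u w huw
  by_cases hu : u = v0
  · subst hu
    have hw : w ≠ u := huw.symm
    beta_reduce
    rw [if_pos rfl, if_neg hw, hsym' w u, hsym w u]
    linear_combination - hx (c u w)
  · by_cases hw : w = v0
    · subst hw
      beta_reduce
      rw [if_pos rfl, if_neg hu]
      linear_combination - hx (c u w)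
    · beta_reduce
      rw [if_neg hu, if_neg hw]
      have hk := key u w v0 huw hw hu
      linear_combination hk - hx (c u w) - hx (c' u v0) - hx (c u v0)
        - hx (c' w v0) - hx (c w v0)
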